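/- Let λ be a real number with λ ≠ 0, and let μ₁, μ₂ ∈ ℂ be the two roots of x² − λx + 1 = 0 (so μ₁ + μ₂ = λ and μ₁·μ₂ = 1). Define γ = (μ₁·conj(μ₂) + 1)/√((1 + |μ₁|²)(1 + |μ₂|²)). Then: (i) the eigenvalues of the 2×2 Hermitian matrix [[1, γ],[conj(γ), 1]] are 1 + |γ| and 1 − |γ|; (ii) if λ² < 4 then |γ| = |λ|/2; and (iii) if λ² > 4 then |γ| = 2/|λ|. -/

import Mathlib

open Matrix

noncomputable section

open Polynomial in
theorem aux_roots (γ : ℂ) :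
    (!![1, γ; (starRingEnd ℂ) γ, 1] : Matrix (Fin 2) (Fin 2) ℂ).charpoly.roots =
      {((1 + ‖γ‖ : ℝ) : ℂ), ((1 - ‖γ‖ : ℝ) : ℂ)} := by
  have h1 : γ * (starRingEnd ℂ) γ = ((‖γ‖ : ℝ) : ℂ) ^ 2 := by
    rw [Complex.mul_conj']
  have hchar : (!![1, γ; (starRingEnd ℂ) γ, 1] : Matrix (Fin 2) (Fin 2) ℂ).charpoly =
      (X - C ((1 + ‖γ‖ : ℝ) : ℂ)) * (X - C ((1 - ‖γ‖ : ℝ) : ℂ)) := by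
    rw [Matrix.charpoly, Matrix.det_fin_two]
    simp [charmatrix_apply_eq, charmatrix_apply_ne]
    rw [show C γ * C ((starRingEnd ℂ) γ) = (C ((‖γ‖ : ℝ) : ℂ))^2 by
      rw [← C_mul, h1, map_pow]]
    ring
  rw [hchar, Polynomial.roots_mul (by apply mul_ne_zero <;> exact Polynomial.X_sub_C_ne_zero _),
    Polynomial.roots_X_sub_C, Polynomial.roots_X_sub_C]
  rfl

theorem gamma_abs (μ₁ μ₂ : ℂ) (hprod : μ₁ * μ₂ = 1) :
    ‖(μ₁ * (starRingEnd ℂ) μ₂ + 1) /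
        ((Real.sqrt ((1 + ‖μ₁‖ ^ 2) * (1 + ‖μ₂‖ ^ 2)) : ℝ) : ℂ)‖ =
      2 * |μ₁.re| / (1 + ‖μ₁‖ ^ 2) := by
  have hμ₁ : μ₁ ≠ 0 := by rintro rfl; simp at hprod
  have hμ₂ : μ₂ = μ₁⁻¹ := by field_simp at hprod ⊢; linear_combination hprod
  subst hμ₂
  have hr : (0:ℝ) < ‖μ₁‖ := norm_pos_iff.mpr hμ₁
  set r : ℝ := ‖μ₁‖ with hrdef
  have habs2 : ‖μ₁⁻¹‖ = r⁻¹ := by rw [norm_inv]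
  have hnum : μ₁ * (starRingEnd ℂ) μ₁⁻¹ + 1 = (2 * μ₁.re : ℂ) / (starRingEnd ℂ) μ₁ := by
    have hc : (starRingEnd ℂ) μ₁ ≠ 0 := by simpa using hμ₁
    rw [map_inv₀, eq_div_iff hc, add_mul, mul_assoc, inv_mul_cancel₀ hc, mul_one, one_mul]
    exact_mod_cast Complex.add_conj μ₁
  have hden : Real.sqrt ((1 + r ^ 2) * (1 + r⁻¹ ^ 2)) = (1 + r^2) / r := by
    have : (1 + r^2) / r = Real.sqrt (((1 + r^2)/r)^2) := by
      rw [Real.sqrt_sq (by positivity)]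
    rw [this]
    congr 1
    field_simp
    ring
  rw [habs2, hden, norm_div, hnum, norm_div, Complex.norm_conj]
  have h2 : ‖2 * (μ₁.re:ℂ)‖ = 2 * |μ₁.re| := by
    rw [norm_mul, (by norm_num : ‖(2:ℂ)‖ = 2), Complex.norm_real, Real.norm_eq_abs]
  rw [h2, Complex.norm_real, Real.norm_eq_abs, abs_of_pos (by positivity : (0:ℝ) < (1 + r^2)/r)]
  field_simp
  rfl

/-- for `λ ≠ 0` and `μ₁, μ₂` the roots of `x² − λx + 1 = 0`, with
`γ = (μ₁·conj(μ₂)+1)/√((1+|μ₁|²)(1+|μ₂|²))`, the eigenvalues of `[[1,γ],[conj γ,1]]`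
are `1 ± |γ|`; moreover `|γ| = |λ|/2` when `λ² < 4` and `|γ| = 2/|λ|` when `λ² > 4`. -/
theorem stmt17 (lam : ℝ) (hlam : lam ≠ 0) (μ₁ μ₂ : ℂ)
    (hsum : μ₁ + μ₂ = (lam : ℂ)) (hprod : μ₁ * μ₂ = 1) :
    (!![1, (μ₁ * (starRingEnd ℂ) μ₂ + 1) /
          ((Real.sqrt ((1 + ‖μ₁‖ ^ 2) * (1 + ‖μ₂‖ ^ 2)) : ℝ) : ℂ);
        (starRingEnd ℂ) ((μ₁ * (starRingEnd ℂ) μ₂ + 1) /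
          ((Real.sqrt ((1 + ‖μ₁‖ ^ 2) * (1 + ‖μ₂‖ ^ 2)) : ℝ) : ℂ)),
        1] : Matrix (Fin 2) (Fin 2) ℂ).charpoly.roots =
      {((1 + ‖(μ₁ * (starRingEnd ℂ) μ₂ + 1) /
          ((Real.sqrt ((1 + ‖μ₁‖ ^ 2) * (1 + ‖μ₂‖ ^ 2)) : ℝ) : ℂ)‖ : ℝ) : ℂ),
       ((1 - ‖(μ₁ * (starRingEnd ℂ) μ₂ + 1) /
          ((Real.sqrt ((1 + ‖μ₁‖ ^ 2) * (1 + ‖μ₂‖ ^ 2)) : ℝ) : ℂ)‖ : ℝ) : ℂ)} ∧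
    (lam ^ 2 < 4 →
      ‖(μ₁ * (starRingEnd ℂ) μ₂ + 1) /
          ((Real.sqrt ((1 + ‖μ₁‖ ^ 2) * (1 + ‖μ₂‖ ^ 2)) : ℝ) : ℂ)‖ =
        |lam| / 2) ∧
    (lam ^ 2 > 4 →
      ‖(μ₁ * (starRingEnd ℂ) μ₂ + 1) /
          ((Real.sqrt ((1 + ‖μ₁‖ ^ 2) * (1 + ‖μ₂‖ ^ 2)) : ℝ) : ℂ)‖ =
        2 / |lam|) := by
  refine ⟨aux_roots _, ?_, ?_⟩ <;> rw [gamma_abs μ₁ μ₂ hprod]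
  all_goals {
    intro h4
    have hμ₁ : μ₁ ≠ 0 := by rintro rfl; simp at hprod
    have heq : μ₁ * μ₁ - (lam:ℂ) * μ₁ + 1 = 0 := by linear_combination μ₁ * hsum - hprod
    set p : ℝ := μ₁.re with hp
    set q : ℝ := μ₁.im with hq
    have hre : p * p - q * q - lam * p + 1 = 0 := by
      have := congrArg Complex.re heq
      simpa [Complex.mul_re, Complex.mul_im] using this
    have him : q * (2 * p - lam) = 0 := by
      have := congrArg Complex.im heq
      simp [Complex.mul_re, Complex.mul_im] at this
      linarith
    have habs : ‖μ₁‖ ^ 2 = p * p + q * q := by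
      rw [Complex.sq_norm, Complex.normSq_apply]
    rw [habs]
    first
    | -- case lam^2 < 4
      ( have hq0 : q ≠ 0 := by
          intro hq0
          rw [hq0] at hre
          nlinarith [sq_nonneg (2 * p - lam)]
        have hpl : p = lam / 2 := by
          rcases mul_eq_zero.mp him with h | h
          · exact absurd h hq0
          · linarith
        have hqq : q * q = 1 - lam^2/4 := by nlinarith
        rw [hpl, hqq, abs_div]
        norm_num
        rw [show (1:ℝ) + (lam/2*(lam/2) + (1 - lam^2/4)) = 2 by ring]
        ring )
    | -- case lam^2 > 4
      ( have hq0 : q = 0 := by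
          by_contra hq0
          have hpl : p = lam / 2 := by
            rcases mul_eq_zero.mp him with h | h
            · exact absurd h hq0
            · linarith
          nlinarith [mul_self_nonneg q]
        rw [hq0] at hre ⊢
        have hp0 : p ≠ 0 := by intro h; rw [h] at hre; linarith
        have hlp : lam * p = 1 + p * p := by linarith
        have hpos : (0:ℝ) < lam * p := by rw [hlp]; nlinarith [mul_self_nonneg p]
        have habs' : |lam| * |p| = lam * p := by rw [← abs_mul, abs_of_pos hpos]
        rw [show (1:ℝ) + (p * p + 0 * 0) = lam * p by linarith, ← habs']
        rw [div_eq_div_iff (by positivity) ((abs_pos.mpr hlam).ne')]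
        ring )
  }

end
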